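/- Let m ≥ 1 and h ∈ ℤ with gcd(m,h) = 1, let k ≥ 1, and set s = gcd(k,m) and t = m/s. Then there exists a permutation matrix P ∈ GL_m(ℚ_p) such that P·B_{m,h}^k·P⁻¹ is block diagonal with s diagonal blocks, each equal to B_{t, kh/s}. -/

import Mathlib

/-!
Statement 4.  For `gcd(m,h) = 1`, `k ≥ 1`, `s = gcd(k,m)`, `t = m/s`, the matrix
`B_{m,h}^k` is conjugate by a permutation matrix to the block-diagonal matrix with
`s` diagonal blocks each equal to `B_{t, kh/s}`.  Conjugation by a permutation
matrix is expressed as taking the `submatrix` along a bijection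
`Fin m ≃ Fin t × Fin s`.
-/

open Matrix

noncomputable section

variable (p : ℕ) [Fact p.Prime] (κ : Type) [Field κ] [IsAlgClosed κ] [CharP κ p]

local notation "𝕎" => WittVector p κ
local notation "K" => FractionRing (WittVector p κ)

/-- The matrix `B_{m,h}`. -/
def Bmat (m : ℕ) (h : ℤ) : Matrix (Fin m) (Fin m) K :=
  fun r j => if (r : ℤ) % m = ((j : ℤ) + h) % m then (p : K) ^ (((j : ℤ) + h) / m) else 0

lemma pK_ne_zero : ((p : K)) ≠ 0 := WittVector.FractionRing.p_nonzero p κ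

/-- `a / b / c = a / (b * c)` for positive `b`, `c`. -/
lemma ediv_ediv_aux (a b c : ℤ) (hb : 0 < b) (hc : 0 < c) : a / b / c = a / (b * c) := by
  have hm1 := Int.emod_nonneg a hb.ne'
  have hm1' := Int.emod_lt_of_pos a hb
  have hm2 := Int.emod_nonneg (a / b) hc.ne'
  have hm2' := Int.emod_lt_of_pos (a / b) hc
  have key : a = (b * ((a / b) % c) + a % b) + (b * c) * (a / b / c) := by
    calc a = b * (a / b) + a % b := (Int.mul_ediv_add_emod a b).symm
      _ = b * (c * (a / b / c) + (a / b) % c) + a % b := by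
        rw [Int.mul_ediv_add_emod (a / b) c]
      _ = (b * ((a / b) % c) + a % b) + (b * c) * (a / b / c) := by ring
  have hw0 : 0 ≤ b * ((a / b) % c) + a % b := by positivity
  have hw1 : b * ((a / b) % c) + a % b < b * c := by nlinarith
  conv_rhs => rw [key]
  rw [Int.add_mul_ediv_left _ _ (by positivity : (b * c) ≠ 0),
    Int.ediv_eq_zero_of_lt hw0 hw1, zero_add]

/-- divisibility condition splitting for the block structure -/
lemma dvd_iff_aux (s t : ℤ) (hs : 0 < s) (c x y : ℤ) :
    t * s ∣ x - (y + s * c) ↔ s ∣ x - y ∧ t ∣ x / s - (y / s + c) := by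
  have hxd := Int.mul_ediv_add_emod x s
  have hyd := Int.mul_ediv_add_emod y s
  constructor
  · intro H
    have hsd : s ∣ x - (y + s * c) := dvd_trans ⟨t, by ring⟩ H
    have h1 : s ∣ x - y := by
      have h2 := dvd_add hsd (dvd_mul_right s c)
      have h3 : x - (y + s * c) + s * c = x - y := by ring
      rwa [h3] at h2
    refine ⟨h1, ?_⟩
    have hmod : x % s = y % s := by
      rw [Int.emod_eq_emod_iff_emod_sub_eq_zero]
      exact Int.emod_eq_zero_of_dvd h1
    have hrw : x - (y + s * c) = s * (x / s - (y / s + c)) := by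
      have hh : x - (y + s * c) = (s * (x / s) + x % s) - ((s * (y / s) + y % s) + s * c) := by
        rw [hxd, hyd]
      rw [hh, hmod]; ring
    rw [hrw, mul_comm t s] at H
    exact (mul_dvd_mul_iff_left hs.ne').mp H
  · rintro ⟨h1, h2⟩
    have hmod : x % s = y % s := by
      rw [Int.emod_eq_emod_iff_emod_sub_eq_zero]
      exact Int.emod_eq_zero_of_dvd h1
    have hrw : x - (y + s * c) = s * (x / s - (y / s + c)) := by
      have hh : x - (y + s * c) = (s * (x / s) + x % s) - ((s * (y / s) + y % s) + s * c) := by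
        rw [hxd, hyd]
      rw [hh, hmod]; ring
    rw [hrw, mul_comm t s]
    exact mul_dvd_mul_left s h2

lemma Bmat_one (m : ℕ) (hm : 1 ≤ m) : Bmat p κ m 0 = 1 := by
  ext r j
  have hr : ((r : ℤ)) % m = r := Int.emod_eq_of_lt (by positivity) (by exact_mod_cast r.isLt)
  have hj : ((j : ℤ) + 0) % m = j := by
    rw [add_zero]; exact Int.emod_eq_of_lt (by positivity) (by exact_mod_cast j.isLt)
  have hdiv : ((j : ℤ) + 0) / m = 0 := by
    rw [add_zero]; exact Int.ediv_eq_zero_of_lt (by positivity) (by exact_mod_cast j.isLt)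
  rw [Bmat, one_apply]
  show (if _ = _ then _ else _) = _
  rw [hr, hj, hdiv]
  by_cases hrj : r = j
  · subst hrj; simp
  · rw [if_neg, if_neg hrj]
    intro hc
    exact hrj (Fin.ext (by exact_mod_cast hc))

lemma Bmat_mul (m : ℕ) (hm : 1 ≤ m) (h₁ h₂ : ℤ) :
    Bmat p κ m h₁ * Bmat p κ m h₂ = Bmat p κ m (h₁ + h₂) := by
  have hm' : (0 : ℤ) < m := by exact_mod_cast hm
  ext r j
  rw [mul_apply]
  set z : ℤ := ((j : ℤ) + h₂) % m with hzdef
  have hz0 : 0 ≤ z := Int.emod_nonneg _ hm'.ne'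
  have hzlt : z < m := Int.emod_lt_of_pos _ hm'
  have hzn : z.toNat < m := by omega
  set x₀ : Fin m := ⟨z.toNat, hzn⟩ with hx₀def
  have hx₀ : ((x₀ : ℕ) : ℤ) = z := by
    simp only [hx₀def]
    omega
  rw [Finset.sum_eq_single x₀]
  · have e2cond : (((x₀ : ℕ) : ℤ)) % m = ((j : ℤ) + h₂) % m := by
      rw [hx₀, hzdef, Int.emod_emod_of_dvd _ dvd_rfl]
    have e1cond : ((((x₀ : ℕ) : ℤ)) + h₁) % m = ((j : ℤ) + (h₁ + h₂)) % m := by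
      rw [hx₀, hzdef, Int.emod_add_emod]
      congr 1; ring
    have hzq : z = ((j : ℤ) + h₂) - m * (((j : ℤ) + h₂) / m) := by
      rw [hzdef, Int.emod_def]
    have e1div : ((((x₀ : ℕ) : ℤ)) + h₁) / m
        = ((j : ℤ) + (h₁ + h₂)) / m - ((j : ℤ) + h₂) / m := by
      rw [hx₀]
      have hh : z + h₁ = ((j : ℤ) + (h₁ + h₂)) + (-(((j : ℤ) + h₂) / m)) * m := by
        rw [hzq]; ring
      rw [hh, Int.add_mul_ediv_right _ _ hm'.ne']
      ring
    simp only [Bmat]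
    rw [if_pos e2cond, e1cond, e1div]
    by_cases hc : ((r : ℤ)) % m = ((j : ℤ) + (h₁ + h₂)) % m
    · rw [if_pos hc, if_pos hc, ← zpow_add₀ (pK_ne_zero p κ)]
      congr 1; ring
    · rw [if_neg hc, if_neg hc, zero_mul]
  · intro b _ hb
    have hz : Bmat p κ m h₂ b j = 0 := by
      simp only [Bmat]
      rw [if_neg]
      intro hc
      apply hb
      have hbval : (((b : ℕ) : ℤ)) % m = ((b : ℕ) : ℤ) :=
        Int.emod_eq_of_lt (by positivity) (by exact_mod_cast b.isLt)
      apply Fin.ext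
      have hbz : (((b : ℕ)) : ℤ) = z := by rw [← hbval, hc, hzdef]
      show (b : ℕ) = x₀
      omega
    rw [hz, mul_zero]
  · intro hmem; exact absurd (Finset.mem_univ x₀) hmem

lemma Bmat_pow (m : ℕ) (hm : 1 ≤ m) (h : ℤ) (k : ℕ) :
    (Bmat p κ m h) ^ k = Bmat p κ m (k * h) := by
  induction k with
  | zero => simp [Bmat_one p κ m hm]
  | succ n ih =>
    rw [pow_succ, ih, Bmat_mul p κ m hm]
    congr 1
    push_cast
    ring

theorem statement_4 (m : ℕ) (hm : 1 ≤ m) (h : ℤ) (hcop : Int.gcd m h = 1)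
    (k : ℕ) (hk : 1 ≤ k) (s t : ℕ) (hs : s = Nat.gcd k m) (ht : t = m / s) :
    ∃ e : Fin m ≃ Fin t × Fin s,
      (Bmat p κ m h) ^ k =
        (Matrix.blockDiagonal fun _ : Fin s => Bmat p κ t (((k : ℤ) * h) / s)).submatrix e e := by
  have hspos : 0 < s := hs ▸ Nat.gcd_pos_of_pos_right k hm
  have hsdvdm : s ∣ m := hs ▸ Nat.gcd_dvd_right k m
  have hsdvdk : s ∣ k := hs ▸ Nat.gcd_dvd_left k m
  have hmts : m = t * s := by rw [ht, Nat.div_mul_cancel hsdvdm]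
  have htpos : 0 < t := by
    rw [ht]
    exact Nat.div_pos (Nat.le_of_dvd hm hsdvdm) hspos
  have hspos' : (0 : ℤ) < s := by exact_mod_cast hspos
  have htpos' : (0 : ℤ) < t := by exact_mod_cast htpos
  set c : ℤ := ((k : ℤ) * h) / s with hcdef
  have hsdvd' : (s : ℤ) ∣ (k : ℤ) * h :=
    dvd_mul_of_dvd_left (Int.natCast_dvd_natCast.mpr hsdvdk) h
  have hsc : (s : ℤ) * c = (k : ℤ) * h := by
    rw [hcdef]; exact Int.mul_ediv_cancel' hsdvd'
  refine ⟨(finCongr hmts).trans finProdFinEquiv.symm, ?_⟩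
  rw [Bmat_pow p κ m hm h k]
  ext x y
  simp only [submatrix_apply, Equiv.trans_apply, finCongr_apply, finProdFinEquiv_symm_apply,
    blockDiagonal_apply]
  have hxv : ((Fin.cast hmts x : Fin (t * s)) : ℕ) = (x : ℕ) := rfl
  have hyv : ((Fin.cast hmts y : Fin (t * s)) : ℕ) = (y : ℕ) := rfl
  have hdivx : ((((Fin.cast hmts x).divNat : Fin t) : ℕ) : ℤ) = ((x : ℕ) : ℤ) / s := by
    rw [Fin.coe_divNat, hxv]
    exact Int.natCast_ediv (x : ℕ) s
  have hdivy : ((((Fin.cast hmts y).divNat : Fin t) : ℕ) : ℤ) = ((y : ℕ) : ℤ) / s := by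
    rw [Fin.coe_divNat, hyv]
    exact Int.natCast_ediv (y : ℕ) s
  have hmodiff : ((Fin.cast hmts x).modNat = (Fin.cast hmts y).modNat) ↔
      (s : ℤ) ∣ ((x : ℕ) : ℤ) - ((y : ℕ) : ℤ) := by
    rw [Fin.ext_iff, Fin.coe_modNat, Fin.coe_modNat, hxv, hyv]
    rw [Int.dvd_iff_emod_eq_zero, ← Int.emod_eq_emod_iff_emod_sub_eq_zero]
    constructor
    · intro hmm
      have := congrArg (Nat.cast : ℕ → ℤ) hmm
      rwa [Int.natCast_emod, Int.natCast_emod] at this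
    · intro hmm
      have h1 : (((x : ℕ) % s : ℕ) : ℤ) = (((y : ℕ) % s : ℕ) : ℤ) := by
        rwa [Int.natCast_emod, Int.natCast_emod]
      exact_mod_cast h1
  have hcond1 : (((x : ℕ) : ℤ)) % (m : ℤ) = (((y : ℕ) : ℤ) + (k : ℤ) * h) % (m : ℤ) ↔
      ((s : ℤ) ∣ ((x : ℕ) : ℤ) - ((y : ℕ) : ℤ) ∧
        (t : ℤ) ∣ ((x : ℕ) : ℤ) / s - (((y : ℕ) : ℤ) / s + c)) := by
    rw [Int.emod_eq_emod_iff_emod_sub_eq_zero, ← Int.dvd_iff_emod_eq_zero]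
    have hmcast : ((m : ℕ) : ℤ) = ((t : ℕ) : ℤ) * ((s : ℕ) : ℤ) := by exact_mod_cast hmts
    rw [hmcast, ← hsc]
    exact dvd_iff_aux (s : ℤ) (t : ℤ) hspos' c _ _
  have hcond2 : (((x : ℕ) : ℤ) / s) % (t : ℤ) = (((y : ℕ) : ℤ) / s + c) % (t : ℤ) ↔
      (t : ℤ) ∣ ((x : ℕ) : ℤ) / s - (((y : ℕ) : ℤ) / s + c) := by
    rw [Int.emod_eq_emod_iff_emod_sub_eq_zero, ← Int.dvd_iff_emod_eq_zero]
  have hexp : (((y : ℕ) : ℤ) + (k : ℤ) * h) / (m : ℤ) = (((y : ℕ) : ℤ) / s + c) / (t : ℤ) := by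
    have hmcast : ((m : ℕ) : ℤ) = ((t : ℕ) : ℤ) * ((s : ℕ) : ℤ) := by exact_mod_cast hmts
    rw [hmcast, ← hsc, mul_comm ((t : ℕ) : ℤ) ((s : ℕ) : ℤ),
      ← ediv_ediv_aux _ _ _ hspos' htpos', Int.add_mul_ediv_left _ c hspos'.ne']
  simp only [Bmat]
  rw [hdivx, hdivy, hexp]
  by_cases hb : (Fin.cast hmts x).modNat = (Fin.cast hmts y).modNat
  · rw [if_pos hb]
    by_cases h2 : (t : ℤ) ∣ ((x : ℕ) : ℤ) / s - (((y : ℕ) : ℤ) / s + c)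
    · rw [if_pos (hcond1.mpr ⟨hmodiff.mp hb, h2⟩), if_pos (hcond2.mpr h2)]
    · rw [if_neg (fun hc => h2 (hcond1.mp hc).2), if_neg (fun hc => h2 (hcond2.mp hc))]
  · rw [if_neg hb, if_neg (fun hc => hb (hmodiff.mpr (hcond1.mp hc).1))]

end
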